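/- Let α > 1, k ≥ 1, n ≥ 0. Then Σ_{i=1}^{n} Σ_{k₁+k₂=k} [1/((10n+10.3−10i)²(10i+0.3)²)] · (k!/(k₁!k₂!)) · (k₁+3(n+1−i))^(α(k₁+3(n+1−i))) · (k₂+3i)^(α(k₂+3i)) ≤ [0.05 · 4^(−(α−3/2))/(1 − 4^(−(α−1)))] · (k+3(n+1))^(α(k+3(n+1))) / (10n+10.3)². -/

import Mathlib

open Real Finset

lemma log_one_add_ge {x : ℝ} (h0 : 0 ≤ x) (h1 : x ≤ 1) :
    x * Real.log 2 ≤ Real.log (1 + x) := by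
  have hexp : Real.exp (x * Real.log 2) ≤ 1 + x := by
    have h := convexOn_exp.2 (Set.mem_univ (0:ℝ)) (Set.mem_univ (Real.log 2))
      (by linarith : (0:ℝ) ≤ 1 - x) h0 (by ring)
    simp only [smul_eq_mul, mul_zero, zero_add, Real.exp_zero] at h
    rw [Real.exp_log (by norm_num)] at h
    calc Real.exp (x * Real.log 2) ≤ (1-x) * 1 + x * 2 := h
    _ = 1 + x := by ring
  calc x * Real.log 2 = Real.log (Real.exp (x * Real.log 2)) := (Real.log_exp _).symm
  _ ≤ Real.log (1 + x) := Real.log_le_log (Real.exp_pos _) hexp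

lemma key_exp (α : ℝ) (hα : 1 < α) (k₁ k₂ : ℕ) (a b : ℝ)
    (ha : (k₁:ℝ) + 3 ≤ a) (hb : (k₂:ℝ) + 3 ≤ b) (hab : a ≤ b) :
    a ^ (α*a - k₁) * b ^ (α*b - k₂)
      ≤ (4:ℝ) ^ (-(α-1) * ((min k₁ k₂ : ℕ) + 1 : ℝ))
        * (a+b) ^ (α*a - (k₁:ℝ) + (α*b - k₂)) := by
  have hk1 : (0:ℝ) ≤ k₁ := Nat.cast_nonneg _
  have hk2 : (0:ℝ) ≤ k₂ := Nat.cast_nonneg _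
  have ha0 : (0:ℝ) < a := by linarith
  have hb0 : (0:ℝ) < b := by linarith
  have hS0 : (0:ℝ) < a + b := by linarith
  have hα1 : (0:ℝ) < α - 1 := by linarith
  have hμ : ((min k₁ k₂ : ℕ) : ℝ) + 1 ≤ a := by
    have : ((min k₁ k₂ : ℕ) : ℝ) ≤ k₁ := by exact_mod_cast Nat.cast_le.mpr (min_le_left _ _)
    linarith
  set μ : ℝ := ((min k₁ k₂ : ℕ) : ℝ) + 1 with hμdef
  have hμ0 : (0:ℝ) ≤ μ := by positivity
  have hp0 : (0:ℝ) < α*a - k₁ := by nlinarith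
  have hq0 : (0:ℝ) < α*b - k₂ := by nlinarith
  rw [← Real.log_le_log_iff (by positivity) (by positivity)]
  rw [Real.log_mul (by positivity) (by positivity),
      Real.log_mul (by positivity) (by positivity),
      Real.log_rpow ha0, Real.log_rpow hb0, Real.log_rpow hS0,
      Real.log_rpow (by norm_num : (0:ℝ) < 4)]
  have hlog4 : Real.log 4 = 2 * Real.log 2 := by
    rw [show (4:ℝ) = 2^2 by norm_num, Real.log_pow]; push_cast; ring
  have hlog2 : (0:ℝ) < Real.log 2 := Real.log_pos (by norm_num)
  -- log(S) - log a ≥ log 2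
  have h2a : Real.log 2 ≤ Real.log (a+b) - Real.log a := by
    rw [← Real.log_div hS0.ne' ha0.ne']
    apply Real.log_le_log (by norm_num)
    rw [le_div_iff₀ ha0]; linarith
  -- log(S) - log b ≥ (a/b) log 2
  have h2b : (a/b) * Real.log 2 ≤ Real.log (a+b) - Real.log b := by
    rw [← Real.log_div hS0.ne' hb0.ne']
    have : (a+b)/b = 1 + a/b := by field_simp; ring
    rw [this]
    exact log_one_add_ge (by positivity) (by rw [div_le_one hb0]; linarith)
  rw [hlog4]
  -- goal: p log a + q log b ≤ -(α-1)*μ*(2 log 2) + (p+q) log S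
  have t1 : ((α-1)*a + 3) * Real.log 2 ≤ (α*a - k₁) * (Real.log (a+b) - Real.log a) := by
    have h1 : (α-1)*a + 3 ≤ α*a - k₁ := by nlinarith
    calc ((α-1)*a + 3) * Real.log 2 ≤ (α*a - k₁) * Real.log 2 :=
          mul_le_mul_of_nonneg_right h1 hlog2.le
    _ ≤ (α*a - k₁) * (Real.log (a+b) - Real.log a) :=
          mul_le_mul_of_nonneg_left h2a hp0.le
  have t2 : (α-1)*a * Real.log 2 ≤ (α*b - k₂) * (Real.log (a+b) - Real.log b) := by
    have h1 : (α-1)*a * Real.log 2 ≤ (α*b - k₂) * ((a/b) * Real.log 2) := by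
      have hba : (α-1)*a ≤ (α*b - k₂) * (a/b) := by
        rw [mul_div_assoc', le_div_iff₀ hb0]
        nlinarith [mul_nonneg ha0.le (by linarith : (0:ℝ) ≤ b - k₂)]
      calc (α-1)*a * Real.log 2 ≤ ((α*b - k₂) * (a/b)) * Real.log 2 :=
            mul_le_mul_of_nonneg_right hba hlog2.le
      _ = (α*b - k₂) * (a/b * Real.log 2) := by ring
    have h2 : (α*b - k₂) * ((a/b) * Real.log 2) ≤ (α*b - k₂) * (Real.log (a+b) - Real.log b) :=
      mul_le_mul_of_nonneg_left h2b hq0.le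
    linarith
  have hfin : 2 * ((α-1) * μ) * Real.log 2 ≤ (2*(α-1)*a + 3) * Real.log 2 := by
    apply mul_le_mul_of_nonneg_right _ hlog2.le
    nlinarith
  nlinarith [t1, t2, hfin]

lemma pointwise_aux (α : ℝ) (hα : 1 < α) (k₁ k₂ : ℕ) (a b : ℝ)
    (ha : (k₁:ℝ) + 3 ≤ a) (hb : (k₂:ℝ) + 3 ≤ b) (hab : a ≤ b) :
    (((k₁+k₂).factorial : ℝ) / (k₁.factorial * k₂.factorial)) * a ^ (α*a) * b ^ (α*b)
      ≤ (4:ℝ) ^ (-(α-1) * ((min k₁ k₂ : ℕ) + 1 : ℝ)) * (a+b) ^ (α*(a+b)) := by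
  have hk1 : (0:ℝ) ≤ k₁ := Nat.cast_nonneg _
  have hk2 : (0:ℝ) ≤ k₂ := Nat.cast_nonneg _
  have ha0 : (0:ℝ) < a := by linarith
  have hb0 : (0:ℝ) < b := by linarith
  have hS0 : (0:ℝ) < a + b := by linarith
  have hC : (((k₁+k₂).factorial : ℝ) / (k₁.factorial * k₂.factorial))
      = ((k₁+k₂).choose k₁ : ℝ) := by
    rw [div_eq_iff (by positivity)]
    have h2 := Nat.add_choose_mul_factorial_mul_factorial k₁ k₂
    rw [show (k₁+k₂).choose k₁ = (k₁+k₂).choose k₂ from Nat.choose_symm_add]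
    exact_mod_cast by push_cast [← h2]; ring
  have hbin : ((k₁+k₂).choose k₁ : ℝ) * a ^ (k₁:ℕ) * b ^ (k₂:ℕ) ≤ (a+b) ^ (k₁+k₂ : ℕ) := by
    rw [add_pow]
    have hmem : k₁ ∈ Finset.range (k₁+k₂+1) := by
      simp [Nat.lt_succ_iff]
    have := Finset.single_le_sum
      (f := fun m => a ^ m * b ^ (k₁+k₂-m) * ((k₁+k₂).choose m : ℝ))
      (fun i _ => by positivity) hmem
    simpa [Nat.add_sub_cancel_left, mul_comm, mul_assoc, mul_left_comm] using this
  have hspla : a ^ (α*a) = a ^ (k₁:ℕ) * a ^ (α*a - k₁) := by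
    rw [← Real.rpow_natCast a k₁, ← Real.rpow_add ha0]; ring_nf
  have hsplb : b ^ (α*b) = b ^ (k₂:ℕ) * b ^ (α*b - k₂) := by
    rw [← Real.rpow_natCast b k₂, ← Real.rpow_add hb0]; ring_nf
  have hkey := key_exp α hα k₁ k₂ a b ha hb hab
  calc (((k₁+k₂).factorial : ℝ) / (k₁.factorial * k₂.factorial)) * a ^ (α*a) * b ^ (α*b)
      = (((k₁+k₂).choose k₁ : ℝ) * a ^ (k₁:ℕ) * b ^ (k₂:ℕ))
        * (a ^ (α*a - k₁) * b ^ (α*b - k₂)) := by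
        rw [hC, hspla, hsplb]; ring
  _ ≤ ((a+b) ^ (k₁+k₂ : ℕ))
        * ((4:ℝ) ^ (-(α-1) * ((min k₁ k₂ : ℕ) + 1 : ℝ))
            * (a+b) ^ (α*a - (k₁:ℝ) + (α*b - k₂))) := by
        apply mul_le_mul hbin hkey (by positivity)
        positivity
  _ = (4:ℝ) ^ (-(α-1) * ((min k₁ k₂ : ℕ) + 1 : ℝ)) * (a+b) ^ (α*(a+b)) := by
        rw [← Real.rpow_natCast (a+b) (k₁+k₂), ← mul_assoc,
          mul_comm ((a+b) ^ ((k₁+k₂:ℕ):ℝ)), mul_assoc, ← Real.rpow_add hS0]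
        push_cast
        ring_nf

lemma pointwise (α : ℝ) (hα : 1 < α) (k₁ k₂ : ℕ) (a b : ℝ)
    (ha : (k₁:ℝ) + 3 ≤ a) (hb : (k₂:ℝ) + 3 ≤ b) :
    (((k₁+k₂).factorial : ℝ) / (k₁.factorial * k₂.factorial)) * a ^ (α*a) * b ^ (α*b)
      ≤ (4:ℝ) ^ (-(α-1) * ((min k₁ k₂ : ℕ) + 1 : ℝ)) * (a+b) ^ (α*(a+b)) := by
  rcases le_total a b with hab | hab
  · exact pointwise_aux α hα k₁ k₂ a b ha hb hab
  · have := pointwise_aux α hα k₂ k₁ b a hb ha hab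
    rw [Nat.add_comm k₂ k₁, min_comm k₂ k₁, add_comm b a] at this
    calc (((k₁+k₂).factorial : ℝ) / (k₁.factorial * k₂.factorial)) * a ^ (α*a) * b ^ (α*b)
        = (((k₁+k₂).factorial : ℝ) / (k₂.factorial * k₁.factorial)) * b ^ (α*b) * a ^ (α*a) := by
          ring
    _ ≤ _ := this

noncomputable def vv (j : ℕ) : ℝ := 1 / (10 * j + 10.3)
noncomputable def sS (n : ℕ) : ℝ := ∑ j ∈ Finset.range n, (vv j)^2
noncomputable def hH (n : ℕ) : ℝ := ∑ j ∈ Finset.range n, vv j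

lemma vv_pos (j : ℕ) : 0 < vv j := by unfold vv; positivity

lemma vv_denom (j : ℕ) : vv j * (10 * j + 10.3) = 1 := by
  unfold vv; rw [div_mul_cancel₀]; positivity

lemma sS_aux (m : ℕ) :
    sS (4+m) + 1/(10*(10*((4+m:ℕ):ℝ)+0.3)) ≤ sS 4 + 1/403 := by
  induction m with
  | zero => norm_num
  | succ m ih =>
      have hstep : sS (4+(m+1)) = sS (4+m) + vv (4+m) ^ 2 := by
        have : 4+(m+1) = (4+m)+1 := by omega
        rw [this]; unfold sS; rw [Finset.sum_range_succ]
      rw [hstep]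
      have hc : (0:ℝ) ≤ ((4+m:ℕ):ℝ) := Nat.cast_nonneg _
      set c : ℝ := ((4+m:ℕ):ℝ) with hcdef
      have hcast : ((4+(m+1):ℕ):ℝ) = c + 1 := by push_cast [hcdef]; ring
      rw [hcast]
      have hkey : vv (4+m) ^ 2 + 1/(10*(10*(c+1)+0.3)) ≤ 1/(10*(10*c+0.3)) := by
        have hv : vv (4+m) = 1/(10*c+10.3) := by unfold vv; rw [hcdef]
        rw [hv]
        have h1 : (0:ℝ) < 10*c+0.3 := by linarith
        have h2 : (0:ℝ) < 10*c+10.3 := by linarith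
        have hsplit : 1/(10*(10*c+0.3)) - 1/(10*(10*(c+1)+0.3))
            = 1/((10*c+0.3)*(10*c+10.3)) := by
          rw [div_sub_div _ _ (by linarith : (10:ℝ)*(10*c+0.3) ≠ 0)
            (by linarith : (10:ℝ)*(10*(c+1)+0.3) ≠ 0), div_eq_div_iff (by nlinarith) (by positivity)]
          ring
        have hsq : (1/(10*c+10.3))^2 ≤ 1/((10*c+0.3)*(10*c+10.3)) := by
          rw [div_pow, one_pow]
          apply one_div_le_one_div_of_le (by positivity)
          nlinarith
        linarith
      linarith
lemma sS_le (n : ℕ) : sS n ≤ sS 4 + 1/403 := by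
  rcases le_or_gt n 4 with hn | hn
  · have h1 : sS n ≤ sS 4 := by
      apply Finset.sum_le_sum_of_subset_of_nonneg (Finset.range_subset_range.mpr hn)
      intro j _ _; positivity
    have h2 : (0:ℝ) < 1/403 := by norm_num
    linarith
  · obtain ⟨m, rfl⟩ : ∃ m, n = 4 + m := ⟨n - 4, by omega⟩
    have := sS_aux m
    have hpos : (0:ℝ) < 1/(10*(10*((4+m:ℕ):ℝ)+0.3)) := by
      have : (0:ℝ) ≤ ((4+m:ℕ):ℝ) := Nat.cast_nonneg _
      positivity
    linarith

lemma hH_aux (m : ℕ) : hH (4+m) ≤ hH 4 + m * (1/50.3) := by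
  induction m with
  | zero => norm_num
  | succ m ih =>
      have hstep : hH (4+(m+1)) = hH (4+m) + vv (4+m) := by
        have : 4+(m+1) = (4+m)+1 := by omega
        rw [this]; unfold hH; rw [Finset.sum_range_succ]
      rw [hstep]
      have hv : vv (4+m) ≤ 1/50.3 := by
        unfold vv
        apply one_div_le_one_div_of_le (by norm_num)
        have : (4:ℝ) ≤ ((4+m:ℕ):ℝ) := by exact_mod_cast Nat.le_add_right 4 m
        linarith
      push_cast
      push_cast at ih
      linarith

lemma numeric_bound (n : ℕ) :
    2 * sS n + 4 * hH n / (10*(n:ℝ) + 10.6) ≤ 0.05 := by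
  rcases lt_or_ge n 4 with hn | hn
  · interval_cases n <;>
      simp [sS, hH, vv, Finset.sum_range_succ] <;> norm_num
  · obtain ⟨m, rfl⟩ : ∃ m, n = 4 + m := ⟨n - 4, by omega⟩
    have hs := sS_le (4+m)
    have hh := hH_aux m
    have hm : (0:ℝ) ≤ m := Nat.cast_nonneg _
    have hcast : ((4+m:ℕ):ℝ) = 4 + (m:ℝ) := by push_cast; ring
    rw [hcast]
    have hden : (0:ℝ) < 10*(4+(m:ℝ)) + 10.6 := by linarith
    have hHnonneg : 0 ≤ hH (4+m) := by
      apply Finset.sum_nonneg; intro j _; exact (vv_pos j).le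
    calc 2 * sS (4+m) + 4 * hH (4+m) / (10*(4+(m:ℝ)) + 10.6)
        ≤ 2 * (sS 4 + 1/403) + 4 * (hH 4 + m*(1/50.3)) / (10*(4+(m:ℝ)) + 10.6) := by
          gcongr
    _ ≤ 0.05 := by
          have h4 : hH 4 = 1/10.3 + 1/20.3 + 1/30.3 + 1/40.3 := by
            simp [hH, vv, Finset.sum_range_succ]; norm_num
          have s4 : sS 4 = (1/10.3)^2 + (1/20.3)^2 + (1/30.3)^2 + (1/40.3)^2 := by
            simp [sS, vv, Finset.sum_range_succ]; norm_num
          have h2 : 4 * (hH 4 + (m:ℝ)*(1/50.3)) / (10*(4+(m:ℝ))+10.6)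
              ≤ 0.05 - 2*(sS 4 + 1/403) := by
            rw [div_le_iff₀ hden, h4, s4]
            nlinarith [hm]
          linarith

lemma icc_to_range (f : ℕ → ℝ) (n : ℕ) :
    ∑ i ∈ Finset.Icc 1 n, f i = ∑ j ∈ Finset.range n, f (1+j) := by
  rw [← Finset.Ico_add_one_right_eq_Icc, Finset.sum_Ico_eq_sum_range]
  simp

lemma coeff_bound (n : ℕ) :
    ∑ i ∈ Finset.Icc 1 n, 1/((10*(n:ℝ) + 10.3 - 10*(i:ℝ))^2 * (10*(i:ℝ)+0.3)^2)
      ≤ 0.05 / (10*(n:ℝ)+10.3)^2 := by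
  have hn0 : (0:ℝ) ≤ n := Nat.cast_nonneg _
  have hP : (0:ℝ) < 10*(n:ℝ)+10.3 := by linarith
  rw [icc_to_range]
  -- step A: per-term bound
  have stepA : ∀ j ∈ Finset.range n,
      1/((10*(n:ℝ) + 10.3 - 10*((1+j:ℕ):ℝ))^2 * (10*((1+j:ℕ):ℝ)+0.3)^2)
        ≤ (vv (n-1-j) + vv j)^2 / (10*(n:ℝ)+10.3)^2 := by
    intro j hj
    have hjn : j < n := Finset.mem_range.mp hj
    have hcast1 : ((1+j:ℕ):ℝ) = 1 + (j:ℝ) := by push_cast; ring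
    have hcast2 : ((n-1-j:ℕ):ℝ) = (n:ℝ) - 1 - (j:ℝ) := by
      have : n - 1 - j = n - (1+j) := by omega
      rw [this]
      push_cast [Nat.cast_sub (by omega : 1+j ≤ n)]
      ring
    have hjr : (j:ℝ) ≤ (n:ℝ) - 1 := by
      have : (j:ℝ) + 1 ≤ n := by exact_mod_cast hjn
      linarith
    have hj0 : (0:ℝ) ≤ j := Nat.cast_nonneg _
    set x : ℝ := 10*(n:ℝ) + 10.3 - 10*((1+j:ℕ):ℝ) with hxdef
    set y : ℝ := 10*((1+j:ℕ):ℝ)+0.3 with hydef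
    have hx : (0:ℝ) < x := by rw [hxdef, hcast1]; linarith
    have hy : (0:ℝ) < y := by rw [hydef, hcast1]; linarith
    have hu : vv (n-1-j) = 1/x := by
      unfold vv; rw [hcast2, hxdef, hcast1]
      norm_num
      ring
    have hv : vv j = 1/y := by
      unfold vv; rw [hydef, hcast1]
      norm_num
      ring
    rw [hu, hv]
    rw [div_le_div_iff₀ (by positivity) (by positivity)]
    have hxy : (1/x + 1/y)^2 * (x^2 * y^2) = (x+y)^2 := by
      field_simp
      ring
    calc 1 * (10*(n:ℝ)+10.3)^2 = (10*(n:ℝ)+10.3)^2 := by ring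
    _ ≤ (x+y)^2 := by
        have hxy2 : x + y = 10*(n:ℝ)+10.6 := by rw [hxdef, hydef]; ring
        rw [hxy2]; nlinarith
    _ = (1/x + 1/y)^2 * (x^2 * y^2) := hxy.symm
  -- step B+C: the reflected-sum bound
  have stepC : ∑ j ∈ Finset.range n, (vv (n-1-j) + vv j)^2
      ≤ 2 * sS n + 4 * hH n / (10*(n:ℝ) + 10.6) := by
    have hden : (0:ℝ) < 10*(n:ℝ) + 10.6 := by linarith
    have key : ∀ j ∈ Finset.range n, (vv (n-1-j) + vv j)^2
        = vv (n-1-j)^2 + vv j^2 + 2*((vv (n-1-j) + vv j)/(10*(n:ℝ)+10.6)) := by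
      intro j hj
      have hjn : j < n := Finset.mem_range.mp hj
      have hcast2 : ((n-1-j:ℕ):ℝ) = (n:ℝ) - 1 - (j:ℝ) := by
        have : n - 1 - j = n - (1+j) := by omega
        rw [this]
        push_cast [Nat.cast_sub (by omega : 1+j ≤ n)]
        ring
      have hdu := vv_denom (n-1-j)
      have hdv := vv_denom j
      rw [hcast2] at hdu
      have huv : vv (n-1-j) * vv j = (vv (n-1-j) + vv j)/(10*(n:ℝ)+10.6) := by
        rw [eq_div_iff hden.ne']
        calc vv (n-1-j) * vv j * (10*(n:ℝ)+10.6)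
            = vv j * (vv (n-1-j) * (10 * ((n:ℝ)-1-(j:ℝ)) + 10.3))
              + vv (n-1-j) * (vv j * (10*(j:ℝ) + 10.3)) := by ring
        _ = vv j * 1 + vv (n-1-j) * 1 := by rw [hdu, hdv]
        _ = vv (n-1-j) + vv j := by ring
      calc (vv (n-1-j) + vv j)^2
          = vv (n-1-j)^2 + vv j^2 + 2*(vv (n-1-j) * vv j) := by ring
      _ = vv (n-1-j)^2 + vv j^2 + 2*((vv (n-1-j) + vv j)/(10*(n:ℝ)+10.6)) := by rw [huv]
    rw [Finset.sum_congr rfl key]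
    rw [Finset.sum_add_distrib, Finset.sum_add_distrib]
    have hrefl2 : ∑ j ∈ Finset.range n, vv (n-1-j)^2 = sS n :=
      Finset.sum_range_reflect (fun j => vv j ^ 2) n
    have hrefl1 : ∑ j ∈ Finset.range n, vv (n-1-j) = hH n :=
      Finset.sum_range_reflect (fun j => vv j) n
    have hcross : ∑ j ∈ Finset.range n, 2*((vv (n-1-j) + vv j)/(10*(n:ℝ)+10.6))
        = 2 * ((hH n + hH n) / (10*(n:ℝ)+10.6)) := by
      rw [← Finset.mul_sum, ← Finset.sum_div, Finset.sum_add_distrib, hrefl1]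
      rfl
    rw [hrefl2, hcross]
    have : sS n = ∑ j ∈ Finset.range n, vv j ^ 2 := rfl
    rw [← this]
    ring_nf
    exact le_rfl
  calc ∑ j ∈ Finset.range n,
        1/((10*(n:ℝ) + 10.3 - 10*((1+j:ℕ):ℝ))^2 * (10*((1+j:ℕ):ℝ)+0.3)^2)
      ≤ ∑ j ∈ Finset.range n, (vv (n-1-j) + vv j)^2 / (10*(n:ℝ)+10.3)^2 :=
        Finset.sum_le_sum stepA
  _ = (∑ j ∈ Finset.range n, (vv (n-1-j) + vv j)^2) / (10*(n:ℝ)+10.3)^2 :=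
        (Finset.sum_div _ _ _).symm
  _ ≤ 0.05 / (10*(n:ℝ)+10.3)^2 := by
      gcongr
      exact stepC.trans (numeric_bound n)


lemma geom_bound (α : ℝ) (hα : 1 < α) (k : ℕ) :
    ∑ p ∈ Finset.HasAntidiagonal.antidiagonal k, (4:ℝ) ^ (-(α-1) * ((min p.1 p.2 : ℕ) + 1 : ℝ))
      ≤ (4:ℝ) ^ (-(α - 3/2)) / (1 - (4:ℝ) ^ (-(α-1))) := by
  set q : ℝ := (4:ℝ) ^ (-(α-1)) with hqdef
  have hq0 : 0 < q := Real.rpow_pos_of_pos (by norm_num) _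
  have hq1 : q < 1 := Real.rpow_lt_one_of_one_lt_of_neg (by norm_num) (by linarith)
  have hterm : ∀ m : ℕ, (4:ℝ) ^ (-(α-1) * ((m:ℝ) + 1)) = q ^ (m+1) := by
    intro m
    rw [hqdef, ← Real.rpow_natCast ((4:ℝ)^(-(α-1))) (m+1),
      ← Real.rpow_mul (by norm_num : (0:ℝ) ≤ 4)]
    push_cast
    ring_nf
  have hRHS : (4:ℝ) ^ (-(α - 3/2)) = 2 * q := by
    rw [hqdef, show -(α - 3/2) = -(α-1) + 1/2 by ring, Real.rpow_add (by norm_num)]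
    rw [show (4:ℝ) ^ ((1:ℝ)/2) = 2 by
      rw [show (4:ℝ) = 2^(2:ℕ) by norm_num, ← Real.rpow_natCast (2:ℝ) 2,
        ← Real.rpow_mul (by norm_num)]
      norm_num]
    ring
  rw [hRHS]
  rw [Finset.Nat.sum_antidiagonal_eq_sum_range_succ_mk]
  have step1 : ∑ j ∈ Finset.range (k+1), (4:ℝ) ^ (-(α-1) * ((min j (k-j) : ℕ) + 1 : ℝ))
      ≤ ∑ j ∈ Finset.range (k+1), (q ^ (j+1) + q ^ (k-j+1)) := by
    apply Finset.sum_le_sum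
    intro j _
    rw [hterm]
    rcases min_cases j (k-j) with ⟨h1, _⟩ | ⟨h1, _⟩
    · rw [h1]
      have : (0:ℝ) ≤ q ^ (k-j+1) := by positivity
      linarith
    · rw [h1]
      have : (0:ℝ) ≤ q ^ (j+1) := by positivity
      linarith
  have step2 : ∑ j ∈ Finset.range (k+1), ((q:ℝ) ^ (j+1) + q ^ (k-j+1))
      = 2 * ∑ j ∈ Finset.range (k+1), q ^ (j+1) := by
    rw [Finset.sum_add_distrib]
    rw [show ∑ j ∈ Finset.range (k+1), (q:ℝ) ^ (k-j+1)
        = ∑ j ∈ Finset.range (k+1), q ^ (j+1) from by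
      rw [← Finset.sum_range_reflect (fun j => (q:ℝ) ^ (j+1)) (k+1)]
      apply Finset.sum_congr rfl
      intro j hj
      have hkj : k + 1 - 1 - j = k - j := by omega
      rw [hkj]]
    ring
  have step3 : ∑ j ∈ Finset.range (k+1), (q:ℝ) ^ (j+1) ≤ q / (1-q) := by
    have : ∑ j ∈ Finset.range (k+1), (q:ℝ) ^ (j+1) = q * ∑ j ∈ Finset.range (k+1), q ^ j := by
      rw [Finset.mul_sum]
      apply Finset.sum_congr rfl
      intro j _; ring
    have h1q : (0:ℝ) < 1 - q := by linarith
    have hqp : (0:ℝ) < q ^ (k+2) := by positivity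
    have key : q * ((q ^ (k+1) - 1) / (q - 1)) = (q - q^(k+2))/(1-q) := by
      rw [mul_div_assoc', div_eq_div_iff (sub_ne_zero_of_ne hq1.ne) h1q.ne']
      ring
    rw [this, geom_sum_eq hq1.ne, key, div_le_div_iff₀ h1q h1q]
    nlinarith [mul_pos hqp h1q]
  calc _ ≤ _ := step1
  _ = _ := step2
  _ ≤ 2 * (q / (1-q)) := by linarith
  _ = 2 * q / (1-q) := by ring

/-- Corollary A.3: for `α > 1`, `k ≥ 1`, `n ≥ 0`,
`Σ_{i=1}^n Σ_{k₁+k₂=k} [1/((10n+10.3-10i)²(10i+0.3)²)] (k!/(k₁!k₂!))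
  (k₁+3(n+1-i))^(α(k₁+3(n+1-i))) (k₂+3i)^(α(k₂+3i))
  ≤ [0.05·4^(-(α-3/2))/(1-4^(-(α-1)))] (k+3(n+1))^(α(k+3(n+1))) / (10n+10.3)²`. -/
theorem corollary_A3 (α : ℝ) (hα : 1 < α) (k n : ℕ) (hk : 1 ≤ k) :
    ∑ i ∈ Finset.Icc 1 n, ∑ p ∈ Finset.HasAntidiagonal.antidiagonal k,
        (1 / ((10 * (n : ℝ) + 10.3 - 10 * (i : ℝ)) ^ 2 * (10 * (i : ℝ) + 0.3) ^ 2))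
          * ((k.factorial : ℝ) / (p.1.factorial * p.2.factorial))
          * ((p.1 : ℝ) + 3 * ((n : ℝ) + 1 - i)) ^ (α * ((p.1 : ℝ) + 3 * ((n : ℝ) + 1 - i)))
          * ((p.2 : ℝ) + 3 * i) ^ (α * ((p.2 : ℝ) + 3 * i))
      ≤ (0.05 * (4 : ℝ) ^ (-(α - 3 / 2)) / (1 - (4 : ℝ) ^ (-(α - 1))))
          * ((k : ℝ) + 3 * ((n : ℝ) + 1)) ^ (α * ((k : ℝ) + 3 * ((n : ℝ) + 1)))
          / (10 * (n : ℝ) + 10.3) ^ 2 := by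
  have hq1 : (4:ℝ)^(-(α-1)) < 1 :=
    Real.rpow_lt_one_of_one_lt_of_neg (by norm_num) (by linarith)
  set S : ℝ := (k:ℝ) + 3*((n:ℝ)+1) with hSdef
  have hS0 : (0:ℝ) < S := by
    have : (0:ℝ) ≤ (k:ℝ) := Nat.cast_nonneg _
    have : (0:ℝ) ≤ (n:ℝ) := Nat.cast_nonneg _
    rw [hSdef]; positivity
  have hSpow : (0:ℝ) ≤ S ^ (α*S) := Real.rpow_nonneg hS0.le _
  set G : ℝ := (4:ℝ)^(-(α-3/2)) / (1 - (4:ℝ)^(-(α-1))) with hGdef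
  have hG0 : 0 ≤ G := by
    rw [hGdef]
    apply div_nonneg (Real.rpow_nonneg (by norm_num) _)
    linarith
  have inner : ∀ i ∈ Finset.Icc 1 n,
      ∑ p ∈ Finset.HasAntidiagonal.antidiagonal k,
        (1 / ((10 * (n : ℝ) + 10.3 - 10 * (i : ℝ)) ^ 2 * (10 * (i : ℝ) + 0.3) ^ 2))
          * ((k.factorial : ℝ) / (p.1.factorial * p.2.factorial))
          * ((p.1 : ℝ) + 3 * ((n : ℝ) + 1 - i)) ^ (α * ((p.1 : ℝ) + 3 * ((n : ℝ) + 1 - i)))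
          * ((p.2 : ℝ) + 3 * i) ^ (α * ((p.2 : ℝ) + 3 * i))
      ≤ (1 / ((10 * (n : ℝ) + 10.3 - 10 * (i : ℝ)) ^ 2 * (10 * (i : ℝ) + 0.3) ^ 2))
          * (G * S ^ (α*S)) := by
    intro i hi
    obtain ⟨hi1, hin⟩ := Finset.mem_Icc.mp hi
    have hi1R : (1:ℝ) ≤ (i:ℝ) := by exact_mod_cast hi1
    have hinR : (i:ℝ) ≤ (n:ℝ) := by exact_mod_cast hin
    have hc0 : (0:ℝ) ≤ 1 / ((10 * (n : ℝ) + 10.3 - 10 * (i : ℝ)) ^ 2 * (10 * (i : ℝ) + 0.3) ^ 2) := by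
      positivity
    have inner2 : ∑ p ∈ Finset.HasAntidiagonal.antidiagonal k,
        ((k.factorial : ℝ) / (p.1.factorial * p.2.factorial))
          * ((p.1 : ℝ) + 3 * ((n : ℝ) + 1 - i)) ^ (α * ((p.1 : ℝ) + 3 * ((n : ℝ) + 1 - i)))
          * ((p.2 : ℝ) + 3 * i) ^ (α * ((p.2 : ℝ) + 3 * i))
        ≤ G * S ^ (α*S) := by
      calc ∑ p ∈ Finset.HasAntidiagonal.antidiagonal k,
            ((k.factorial : ℝ) / (p.1.factorial * p.2.factorial))
              * ((p.1 : ℝ) + 3 * ((n : ℝ) + 1 - i)) ^ (α * ((p.1 : ℝ) + 3 * ((n : ℝ) + 1 - i)))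
              * ((p.2 : ℝ) + 3 * i) ^ (α * ((p.2 : ℝ) + 3 * i))
          ≤ ∑ p ∈ Finset.HasAntidiagonal.antidiagonal k,
            (4:ℝ) ^ (-(α-1) * ((min p.1 p.2 : ℕ) + 1 : ℝ)) * S ^ (α*S) := by
            apply Finset.sum_le_sum
            intro p hp
            have hpk : p.1 + p.2 = k := Finset.HasAntidiagonal.mem_antidiagonal.mp hp
            set a : ℝ := (p.1 : ℝ) + 3 * ((n : ℝ) + 1 - i) with hadef
            set b : ℝ := (p.2 : ℝ) + 3 * (i:ℝ) with hbdef
            have ha : (p.1:ℝ) + 3 ≤ a := by rw [hadef]; linarith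
            have hb : (p.2:ℝ) + 3 ≤ b := by rw [hbdef]; linarith
            have hk' : (p.1:ℝ) + (p.2:ℝ) = (k:ℝ) := by exact_mod_cast hpk
            have hab : a + b = S := by rw [hadef, hbdef, hSdef, ← hk']; ring
            have hpt := pointwise α hα p.1 p.2 a b ha hb
            rw [hpk] at hpt
            rw [hab] at hpt
            exact hpt
      _ = (∑ p ∈ Finset.HasAntidiagonal.antidiagonal k,
            (4:ℝ) ^ (-(α-1) * ((min p.1 p.2 : ℕ) + 1 : ℝ))) * S ^ (α*S) := by
            rw [Finset.sum_mul]
      _ ≤ G * S ^ (α*S) := by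
            apply mul_le_mul_of_nonneg_right _ hSpow
            rw [hGdef]
            exact geom_bound α hα k
    calc ∑ p ∈ Finset.HasAntidiagonal.antidiagonal k,
        (1 / ((10 * (n : ℝ) + 10.3 - 10 * (i : ℝ)) ^ 2 * (10 * (i : ℝ) + 0.3) ^ 2))
          * ((k.factorial : ℝ) / (p.1.factorial * p.2.factorial))
          * ((p.1 : ℝ) + 3 * ((n : ℝ) + 1 - i)) ^ (α * ((p.1 : ℝ) + 3 * ((n : ℝ) + 1 - i)))
          * ((p.2 : ℝ) + 3 * i) ^ (α * ((p.2 : ℝ) + 3 * i))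
        = (1 / ((10 * (n : ℝ) + 10.3 - 10 * (i : ℝ)) ^ 2 * (10 * (i : ℝ) + 0.3) ^ 2))
          * ∑ p ∈ Finset.HasAntidiagonal.antidiagonal k,
            ((k.factorial : ℝ) / (p.1.factorial * p.2.factorial))
              * ((p.1 : ℝ) + 3 * ((n : ℝ) + 1 - i)) ^ (α * ((p.1 : ℝ) + 3 * ((n : ℝ) + 1 - i)))
              * ((p.2 : ℝ) + 3 * i) ^ (α * ((p.2 : ℝ) + 3 * i)) := by
          rw [Finset.mul_sum]
          apply Finset.sum_congr rfl
          intro p _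
          ring
    _ ≤ _ := mul_le_mul_of_nonneg_left inner2 hc0
  calc ∑ i ∈ Finset.Icc 1 n, ∑ p ∈ Finset.HasAntidiagonal.antidiagonal k,
        (1 / ((10 * (n : ℝ) + 10.3 - 10 * (i : ℝ)) ^ 2 * (10 * (i : ℝ) + 0.3) ^ 2))
          * ((k.factorial : ℝ) / (p.1.factorial * p.2.factorial))
          * ((p.1 : ℝ) + 3 * ((n : ℝ) + 1 - i)) ^ (α * ((p.1 : ℝ) + 3 * ((n : ℝ) + 1 - i)))
          * ((p.2 : ℝ) + 3 * i) ^ (α * ((p.2 : ℝ) + 3 * i))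
      ≤ ∑ i ∈ Finset.Icc 1 n,
        (1 / ((10 * (n : ℝ) + 10.3 - 10 * (i : ℝ)) ^ 2 * (10 * (i : ℝ) + 0.3) ^ 2))
          * (G * S ^ (α*S)) := Finset.sum_le_sum inner
  _ = (∑ i ∈ Finset.Icc 1 n,
        1 / ((10 * (n : ℝ) + 10.3 - 10 * (i : ℝ)) ^ 2 * (10 * (i : ℝ) + 0.3) ^ 2))
          * (G * S ^ (α*S)) := by rw [Finset.sum_mul]
  _ ≤ (0.05 / (10*(n:ℝ)+10.3)^2) * (G * S ^ (α*S)) := by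
      apply mul_le_mul_of_nonneg_right _ (mul_nonneg hG0 hSpow)
      have := coeff_bound n
      convert this using 2
  _ = (0.05 * (4 : ℝ) ^ (-(α - 3 / 2)) / (1 - (4 : ℝ) ^ (-(α - 1))))
          * S ^ (α*S) / (10 * (n : ℝ) + 10.3) ^ 2 := by
      rw [hGdef]; ring
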